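/- Let r₁, r₂, b₁, b₂, δ₁, δ₂, δ₃, δ₄ be positive reals with δ₁δ₂ ≥ δ₃δ₄, and let T be the competition map T(x,y) = (r₁x^{δ₁}/(1+x^{δ₁}+b₁y^{δ₃}), r₂y^{δ₂}/(1+y^{δ₂}+b₂x^{δ₄})). Then T restricted to the open positive quadrant (0,∞)² is injective. -/

import Mathlib

set_option maxHeartbeats 1000000

/-- Key lemma: from the two cross-multiplied equations, `x' < x` is impossible. -/
lemma stmt_10_key (b₁ b₂ δ₁ δ₂ δ₃ δ₄ : ℝ)
    (hb₁ : 0 < b₁) (hb₂ : 0 < b₂)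
    (hδ₁ : 0 < δ₁) (hδ₂ : 0 < δ₂) (hδ₃ : 0 < δ₃) (hδ₄ : 0 < δ₄)
    (hδ : δ₁ * δ₂ ≥ δ₃ * δ₄)
    {x y x' y' : ℝ} (hx : 0 < x) (hy : 0 < y) (hx' : 0 < x') (hy' : 0 < y')
    (e1 : x ^ δ₁ + b₁ * (x ^ δ₁ * y' ^ δ₃) = x' ^ δ₁ + b₁ * (x' ^ δ₁ * y ^ δ₃))
    (e2 : y ^ δ₂ + b₂ * (y ^ δ₂ * x' ^ δ₄) = y' ^ δ₂ + b₂ * (y' ^ δ₂ * x ^ δ₄)) :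
    ¬ x' < x := by
  intro hlt
  have hX : x' ^ δ₁ < x ^ δ₁ := Real.rpow_lt_rpow hx'.le hlt hδ₁
  have hX'pos : (0:ℝ) < x' ^ δ₁ := Real.rpow_pos_of_pos hx' _
  have hW'pos : (0:ℝ) < y' ^ δ₃ := Real.rpow_pos_of_pos hy' _
  have hWpos : (0:ℝ) < y ^ δ₃ := Real.rpow_pos_of_pos hy _
  have I1 : x ^ δ₁ * y' ^ δ₃ < x' ^ δ₁ * y ^ δ₃ := by nlinarith
  have hW : y' ^ δ₃ < y ^ δ₃ := by nlinarith
  have hyy : y' < y := by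
    by_contra h
    push_neg at h
    exact absurd (Real.rpow_le_rpow hy.le h hδ₃.le) (not_le.mpr hW)
  have hY : y' ^ δ₂ < y ^ δ₂ := Real.rpow_lt_rpow hy'.le hyy hδ₂
  have hZpos : (0:ℝ) < x ^ δ₄ := Real.rpow_pos_of_pos hx _
  have hZ'pos : (0:ℝ) < x' ^ δ₄ := Real.rpow_pos_of_pos hx' _
  have hY'pos : (0:ℝ) < y' ^ δ₂ := Real.rpow_pos_of_pos hy' _
  have I2 : y ^ δ₂ * x' ^ δ₄ < y' ^ δ₂ * x ^ δ₄ := by nlinarith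
  -- raise I1 to power δ₂
  have J1 : x ^ (δ₁ * δ₂) * y' ^ (δ₂ * δ₃) < x' ^ (δ₁ * δ₂) * y ^ (δ₂ * δ₃) := by
    have h := Real.rpow_lt_rpow (by positivity) I1 hδ₂
    rw [Real.mul_rpow (by positivity) (by positivity),
        Real.mul_rpow (by positivity) (by positivity),
        ← Real.rpow_mul hx.le, ← Real.rpow_mul hy'.le,
        ← Real.rpow_mul hx'.le, ← Real.rpow_mul hy.le] at h
    rw [show δ₂ * δ₃ = δ₃ * δ₂ by ring]
    exact h
  -- raise I2 to power δ₃
  have J2 : y ^ (δ₂ * δ₃) * x' ^ (δ₃ * δ₄) < y' ^ (δ₂ * δ₃) * x ^ (δ₃ * δ₄) := by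
    have h := Real.rpow_lt_rpow (by positivity) I2 hδ₃
    rw [Real.mul_rpow (by positivity) (by positivity),
        Real.mul_rpow (by positivity) (by positivity),
        ← Real.rpow_mul hy.le, ← Real.rpow_mul hx'.le,
        ← Real.rpow_mul hy'.le, ← Real.rpow_mul hx.le] at h
    rw [show δ₃ * δ₄ = δ₄ * δ₃ by ring]
    exact h
  have hA : (0:ℝ) < x ^ (δ₁ * δ₂) := Real.rpow_pos_of_pos hx _
  have hA' : (0:ℝ) < x' ^ (δ₁ * δ₂) := Real.rpow_pos_of_pos hx' _
  have hB : (0:ℝ) < y ^ (δ₂ * δ₃) := Real.rpow_pos_of_pos hy _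
  have hB' : (0:ℝ) < y' ^ (δ₂ * δ₃) := Real.rpow_pos_of_pos hy' _
  have hC : (0:ℝ) < x ^ (δ₃ * δ₄) := Real.rpow_pos_of_pos hx _
  have hC' : (0:ℝ) < x' ^ (δ₃ * δ₄) := Real.rpow_pos_of_pos hx' _
  have hm := mul_lt_mul'' J1 J2 (by positivity) (by positivity)
  have K : x ^ (δ₁ * δ₂) * x' ^ (δ₃ * δ₄) < x' ^ (δ₁ * δ₂) * x ^ (δ₃ * δ₄) := by
    have hm' : (y ^ (δ₂ * δ₃) * y' ^ (δ₂ * δ₃)) * (x ^ (δ₁ * δ₂) * x' ^ (δ₃ * δ₄))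
        < (y ^ (δ₂ * δ₃) * y' ^ (δ₂ * δ₃)) * (x' ^ (δ₁ * δ₂) * x ^ (δ₃ * δ₄)) := by
      nlinarith [hm]
    exact lt_of_mul_lt_mul_left hm' (by positivity)
  set e := δ₁ * δ₂ - δ₃ * δ₄ with he_def
  have he : 0 ≤ e := by simp [he_def]; linarith
  have hsx : x ^ (δ₁ * δ₂) = x ^ e * x ^ (δ₃ * δ₄) := by
    rw [← Real.rpow_add hx, he_def, sub_add_cancel]
  have hsx' : x' ^ (δ₁ * δ₂) = x' ^ e * x' ^ (δ₃ * δ₄) := by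
    rw [← Real.rpow_add hx', he_def, sub_add_cancel]
  have hE : (0:ℝ) < x ^ e := Real.rpow_pos_of_pos hx _
  have hE' : (0:ℝ) < x' ^ e := Real.rpow_pos_of_pos hx' _
  have hle : x' ^ e ≤ x ^ e := Real.rpow_le_rpow hx'.le hlt.le he
  rw [hsx, hsx'] at K
  nlinarith [K, mul_pos hC hC']

/-- If `δ₁δ₂ ≥ δ₃δ₄`, the competition map `T` is injective on the open
positive quadrant. -/
theorem stmt_10 (r₁ r₂ b₁ b₂ δ₁ δ₂ δ₃ δ₄ : ℝ)
    (hr₁ : 0 < r₁) (hr₂ : 0 < r₂) (hb₁ : 0 < b₁) (hb₂ : 0 < b₂)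
    (hδ₁ : 0 < δ₁) (hδ₂ : 0 < δ₂) (hδ₃ : 0 < δ₃) (hδ₄ : 0 < δ₄)
    (hδ : δ₁ * δ₂ ≥ δ₃ * δ₄)
    (T : ℝ × ℝ → ℝ × ℝ)
    (hT : ∀ x y : ℝ, T (x, y) =
      (r₁ * x ^ δ₁ / (1 + x ^ δ₁ + b₁ * y ^ δ₃),
       r₂ * y ^ δ₂ / (1 + y ^ δ₂ + b₂ * x ^ δ₄))) :
    Set.InjOn T {p : ℝ × ℝ | 0 < p.1 ∧ 0 < p.2} := by
  rintro ⟨x, y⟩ ⟨hx, hy⟩ ⟨x', y'⟩ ⟨hx', hy'⟩ hpq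
  simp only [Set.mem_setOf_eq] at hx hy hx' hy'
  rw [hT x y, hT x' y', Prod.mk.injEq] at hpq
  obtain ⟨h1, h2⟩ := hpq
  have D1 : (0:ℝ) < 1 + x ^ δ₁ + b₁ * y ^ δ₃ := by positivity
  have D1' : (0:ℝ) < 1 + x' ^ δ₁ + b₁ * y' ^ δ₃ := by positivity
  have D2 : (0:ℝ) < 1 + y ^ δ₂ + b₂ * x ^ δ₄ := by positivity
  have D2' : (0:ℝ) < 1 + y' ^ δ₂ + b₂ * x' ^ δ₄ := by positivity
  rw [div_eq_div_iff D1.ne' D1'.ne'] at h1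
  rw [div_eq_div_iff D2.ne' D2'.ne'] at h2
  have h1' : x ^ δ₁ * (1 + x' ^ δ₁ + b₁ * y' ^ δ₃)
      = x' ^ δ₁ * (1 + x ^ δ₁ + b₁ * y ^ δ₃) :=
    mul_left_cancel₀ hr₁.ne' (by linear_combination h1)
  have h2' : y ^ δ₂ * (1 + y' ^ δ₂ + b₂ * x' ^ δ₄)
      = y' ^ δ₂ * (1 + y ^ δ₂ + b₂ * x ^ δ₄) :=
    mul_left_cancel₀ hr₂.ne' (by linear_combination h2)
  have e1 : x ^ δ₁ + b₁ * (x ^ δ₁ * y' ^ δ₃) = x' ^ δ₁ + b₁ * (x' ^ δ₁ * y ^ δ₃) := by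
    linear_combination h1'
  have e2 : y ^ δ₂ + b₂ * (y ^ δ₂ * x' ^ δ₄) = y' ^ δ₂ + b₂ * (y' ^ δ₂ * x ^ δ₄) := by
    linear_combination h2'
  have hxx : x = x' := by
    rcases lt_trichotomy x' x with h | h | h
    · exact absurd h (stmt_10_key b₁ b₂ δ₁ δ₂ δ₃ δ₄ hb₁ hb₂ hδ₁ hδ₂ hδ₃ hδ₄ hδ
        hx hy hx' hy' e1 e2)
    · exact h.symm
    · exact absurd h (stmt_10_key b₁ b₂ δ₁ δ₂ δ₃ δ₄ hb₁ hb₂ hδ₁ hδ₂ hδ₃ hδ₄ hδ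
        hx' hy' hx hy e1.symm e2.symm)
  subst hxx
  have hXpos : (0:ℝ) < x ^ δ₁ := Real.rpow_pos_of_pos hx _
  have hWW : y' ^ δ₃ = y ^ δ₃ := by
    have : b₁ * (x ^ δ₁ * y' ^ δ₃) = b₁ * (x ^ δ₁ * y ^ δ₃) := by linarith
    have := mul_left_cancel₀ hb₁.ne' this
    exact mul_left_cancel₀ hXpos.ne' this
  have hyy : y = y' := by
    rcases lt_trichotomy y y' with h | h | h
    · exact absurd hWW (ne_of_gt (Real.rpow_lt_rpow hy.le h hδ₃))
    · exact h
    · exact absurd hWW (ne_of_lt (Real.rpow_lt_rpow hy'.le h hδ₃))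
  rw [hyy]
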